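/- Let P be a finite set of points in the plane such that no three are collinear and no two of the C(|P|,2) connecting lines are parallel. As a directed line rotates through a half-turn, the induced orders of P by orthogonal projection form a sequence of permutations in which consecutive permutations differ by one adjacent transposition and each pair of points is transposed exactly once. -/

import Mathlib

open Real Set

/-- The 2×2 determinant of two planar vectors. -/
def det2 (u v : ℝ × ℝ) : ℝ := u.1 * v.2 - u.2 * v.1

/-- projection of v onto direction θ -/
noncomputable def dirF (θ : ℝ) (v : ℝ × ℝ) : ℝ := Real.cos θ * v.1 + Real.sin θ * v.2

lemma dirF_sub (θ : ℝ) (u v : ℝ × ℝ) : dirF θ (u - v) = dirF θ u - dirF θ v := by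
  simp [dirF, Prod.fst_sub, Prod.snd_sub]; ring

lemma dirF_neg (θ : ℝ) (v : ℝ × ℝ) : dirF θ (-v) = - dirF θ v := by
  simp [dirF]; ring

lemma continuous_dirF (v : ℝ × ℝ) : Continuous (fun θ => dirF θ v) := by
  unfold dirF; fun_prop

lemma det2_eq_zero_of_dirF {θ : ℝ} {u v : ℝ × ℝ} (hu : dirF θ u = 0) (hv : dirF θ v = 0) :
    det2 u v = 0 := by
  unfold dirF at hu hv
  unfold det2
  linear_combination (Real.cos θ * v.2 - Real.sin θ * v.1) * hu +
    (Real.sin θ * u.1 - Real.cos θ * u.2) * hv +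
    (u.2 * v.1 - u.1 * v.2) * (Real.sin_sq_add_cos_sq θ)

lemma exists_polar {v : ℝ × ℝ} (hv : v ≠ 0) :
    ∃ R φ : ℝ, 0 < R ∧ ∀ θ, dirF θ v = R * Real.cos (θ - φ) := by
  set z : ℂ := ⟨v.1, v.2⟩ with hz
  have hz0 : z ≠ 0 := by
    intro h
    apply hv
    have h1 : z.re = 0 := by rw [h]; simp
    have h2 : z.im = 0 := by rw [h]; simp
    exact Prod.ext h1 h2
  refine ⟨‖z‖, z.arg, norm_pos_iff.mpr hz0, fun θ => ?_⟩
  have hc := Complex.cos_arg hz0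
  have hs := Complex.sin_arg z
  have hR : (‖z‖) ≠ 0 := (norm_pos_iff.mpr hz0).ne'
  rw [Real.cos_sub]
  unfold dirF
  have hre : z.re = v.1 := rfl
  have him : z.im = v.2 := rfl
  rw [hre] at hc
  rw [him] at hs
  rw [hc, hs]
  field_simp
lemma crit_char {R φ : ℝ} (hR : 0 < R) (v : ℝ × ℝ)
    (hF : ∀ θ, dirF θ v = R * Real.cos (θ - φ)) (θ : ℝ) :
    dirF θ v = 0 ↔ ∃ k : ℤ, θ = (φ + π/2) + k • π := by
  rw [hF, mul_eq_zero, or_iff_right hR.ne', Real.cos_eq_zero_iff]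
  constructor
  · rintro ⟨k, hk⟩
    exact ⟨k, by push_cast [zsmul_eq_mul]; linarith⟩
  · rintro ⟨k, hk⟩
    exact ⟨k, by rw [hk]; push_cast [zsmul_eq_mul]; ring⟩

lemma existsUnique_crit {v : ℝ × ℝ} (hv : v ≠ 0) (a : ℝ) :
    ∃! θ : ℝ, θ ∈ Set.Ico a (a + π) ∧ dirF θ v = 0 := by
  obtain ⟨R, φ, hR, hF⟩ := exists_polar hv
  obtain ⟨m, hm, hmu⟩ := existsUnique_add_zsmul_mem_Ico Real.pi_pos (φ + π/2) a
  refine ⟨(φ + π/2) + m • π, ⟨hm, (crit_char hR v hF _).2 ⟨m, rfl⟩⟩, ?_⟩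
  rintro θ' ⟨hθ'mem, hθ'0⟩
  obtain ⟨k, hk⟩ := (crit_char hR v hF θ').1 hθ'0
  rw [hk] at hθ'mem ⊢
  rw [hmu k hθ'mem]

lemma sign_flip {v : ℝ × ℝ} (hv : v ≠ 0) {t x y : ℝ} (ht : dirF t v = 0)
    (hx : x ∈ Set.Ioo (t - π) t) (hy : y ∈ Set.Ioo t (t + π)) :
    dirF x v * dirF y v < 0 := by
  obtain ⟨R, φ, hR, hF⟩ := exists_polar hv
  obtain ⟨k, hk⟩ := (crit_char hR v hF t).1 ht
  have key : ∀ s : ℝ, dirF (t + s) v = R * ((-1 : ℝ) ^ k * (- Real.sin s)) := by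
    intro s
    rw [hF, hk]
    have : φ + π / 2 + k • π + s - φ = (s + π/2) + (k : ℝ) * π := by
      push_cast [zsmul_eq_mul]; ring
    rw [this, Real.cos_add_int_mul_pi, Real.cos_add_pi_div_two]
  have hx' := key (x - t)
  have hy' := key (y - t)
  rw [add_sub_cancel] at hx' hy'
  rw [hx', hy']
  have hsx : Real.sin (x - t) < 0 :=
    Real.sin_neg_of_neg_of_neg_pi_lt (by linarith [hx.2]) (by linarith [hx.1])
  have hsy : 0 < Real.sin (y - t) :=
    Real.sin_pos_of_pos_of_lt_pi (by linarith [hy.1]) (by linarith [hy.2])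
  have h1 : (-1 : ℝ) ^ k * (-1 : ℝ) ^ k = 1 := by
    rw [← zpow_add₀ (by norm_num : (-1:ℝ) ≠ 0)]
    have : k + k = 2 * k := by ring
    rw [this, zpow_mul]
    norm_num
  have : R * ((-1:ℝ) ^ k * -Real.sin (x - t)) * (R * ((-1:ℝ) ^ k * -Real.sin (y - t)))
      = R * R * ((-1:ℝ)^k * (-1:ℝ)^k) * (Real.sin (x - t) * Real.sin (y - t)) := by ring
  rw [this, h1]
  have : Real.sin (x - t) * Real.sin (y - t) < 0 := mul_neg_of_neg_of_pos hsx hsy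
  nlinarith [mul_pos hR hR]

lemma sign_const (v : ℝ × ℝ) {x y : ℝ} (hxy : x ≤ y)
    (h : ∀ θ ∈ Set.Icc x y, dirF θ v ≠ 0) : 0 < dirF x v * dirF y v := by
  have hx := h x ⟨le_rfl, hxy⟩
  have hy := h y ⟨hxy, le_rfl⟩
  have hcont : ContinuousOn (fun θ => dirF θ v) (Set.Icc x y) :=
    (continuous_dirF v).continuousOn
  rcases hx.lt_or_gt with hx1 | hx1 <;> rcases hy.lt_or_gt with hy1 | hy1
  · exact mul_pos_of_neg_of_neg hx1 hy1
  · exfalso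
    obtain ⟨c, hc, hc0⟩ := intermediate_value_Icc hxy hcont ⟨hx1.le, hy1.le⟩
    exact h c hc hc0
  · exfalso
    obtain ⟨c, hc, hc0⟩ := intermediate_value_Icc' hxy hcont ⟨hy1.le, hx1.le⟩
    exact h c hc hc0
  · exact mul_pos hx1 hy1

lemma perm_eq_of_strictMono {n : ℕ} {u : Fin n → ℝ} {e₁ e₂ : Equiv.Perm (Fin n)}
    (h₁ : StrictMono (u ∘ e₁)) (h₂ : StrictMono (u ∘ e₂)) : e₁ = e₂ := by
  have hr : Set.range (u ∘ e₁) = Set.range (u ∘ e₂) := by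
    rw [Set.range_comp, Set.range_comp, Equiv.range_eq_univ, Equiv.range_eq_univ]
  have h12 : u ∘ ⇑e₁ = u ∘ ⇑e₂ :=
    (@StrictMono.range_inj (Fin n) ℝ _ _ (inferInstance : WellFoundedLT (Fin n)) _ _ h₁ h₂).mp hr
  have hu : Function.Injective u := by
    intro a b hab
    have h3 := h₁.injective.eq_iff.1 (show (u ∘ e₁) (e₁.symm a) = (u ∘ e₁) (e₁.symm b) by
      simp [hab])
    simpa using congrArg e₁ h3
  exact Equiv.ext fun x => hu (congrFun h12 x)
open Finset
lemma card_lt_pairs (n : ℕ) :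
    ((Finset.univ : Finset (Fin n × Fin n)).filter (fun x => x.1 < x.2)).card = n.choose 2 := by
  have h := Sym2.card_image_offDiag (Finset.univ : Finset (Fin n))
  rw [Finset.card_univ, Fintype.card_fin] at h
  rw [← h]
  apply Finset.card_bij (fun x _ => Function.uncurry Sym2.mk x)
  · rintro ⟨a, b⟩ ha
    simp only [Finset.mem_filter] at ha
    exact Finset.mem_image_of_mem _ (Finset.mem_offDiag.2 ⟨Finset.mem_univ _, Finset.mem_univ _, ne_of_lt ha.2⟩)
  · rintro ⟨a, b⟩ ha ⟨c, d⟩ hc h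
    simp only [Finset.mem_filter] at ha hc
    rcases Sym2.mk_eq_mk_iff.1 h with h' | h'
    · exact h'
    · rw [Prod.ext_iff] at h'
      simp only [Prod.snd_swap, Prod.fst_swap] at h'
      exact absurd (h'.1 ▸ h'.2 ▸ hc.2) (asymm ha.2)
  · rintro z hz
    obtain ⟨⟨a, b⟩, hab, rfl⟩ := Finset.mem_image.1 hz
    have hne : a ≠ b := (Finset.mem_offDiag.1 hab).2.2
    rcases hne.lt_or_gt with h' | h'
    · exact ⟨(a, b), Finset.mem_filter.2 ⟨Finset.mem_univ _, h'⟩, rfl⟩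
    · exact ⟨(b, a), Finset.mem_filter.2 ⟨Finset.mem_univ _, h'⟩, Sym2.eq_swap⟩
theorem rotating_line_allowable_sequence (n : ℕ) (P : Fin n → ℝ × ℝ)
    (hinj : Function.Injective P)
    (h3 : ∀ i j k : Fin n, i ≠ j → i ≠ k → j ≠ k →
      det2 (P j - P i) (P k - P i) ≠ 0)
    (hpar : ∀ i j k l : Fin n, i ≠ j → k ≠ l →
      ({i, j} : Set (Fin n)) ≠ {k, l} → det2 (P j - P i) (P l - P k) ≠ 0) :
    ∃ (σ : Fin (n.choose 2 + 1) → (Fin n ≃ Fin n))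
      (pos : Fin (n.choose 2) → Fin n)
      (hpos : ∀ i, (pos i).val + 1 < n)
      (θ : Fin (n.choose 2 + 1) → ℝ),
      StrictMono θ ∧ θ (Fin.last _) < θ 0 + Real.pi ∧
      (∀ m (p q : Fin n), p < q →
        Real.cos (θ m) * (P (σ m p)).1 + Real.sin (θ m) * (P (σ m p)).2 <
        Real.cos (θ m) * (P (σ m q)).1 + Real.sin (θ m) * (P (σ m q)).2) ∧
      (∀ i : Fin (n.choose 2),
        σ i.succ = (Equiv.swap (pos i) ⟨(pos i).val + 1, hpos i⟩).trans
          (σ i.castSucc)) ∧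
      (∀ a b : Fin n, a ≠ b →
        ∃! i : Fin (n.choose 2),
          ({σ i.castSucc (pos i), σ i.castSucc ⟨(pos i).val + 1, hpos i⟩} :
            Set (Fin n)) = {a, b}) := by
  classical
  set N := n.choose 2 with hNdef
  have hd : ∀ p q : Fin n, p ≠ q → P p - P q ≠ 0 := fun p q h =>
    sub_ne_zero.2 fun e => h (hinj e)
  -- base angle θ₀ avoiding all critical angles
  have hc0 : ∀ x : Fin n × Fin n, ∃ θ : ℝ, x.1 < x.2 →
      θ ∈ Set.Ico (0:ℝ) (0 + π) ∧ dirF θ (P x.1 - P x.2) = 0 := by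
    intro x
    by_cases h : x.1 < x.2
    · obtain ⟨θ, hθ, -⟩ := existsUnique_crit (hd _ _ h.ne) 0
      exact ⟨θ, fun _ => hθ⟩
    · exact ⟨0, fun h' => absurd h' h⟩
  choose c₀ hc₀ using hc0
  set Pairs : Finset (Fin n × Fin n) :=
    (Finset.univ.filter (fun x : Fin n × Fin n => x.1 < x.2)) with hPairs
  have hPairsCard : Pairs.card = N := card_lt_pairs n
  obtain ⟨θ₀, hθ₀Ico, hθ₀Z⟩ :
      ∃ θ₀, θ₀ ∈ Set.Ico (0:ℝ) (0 + π) ∧ θ₀ ∉ (Pairs.image c₀ : Finset ℝ) := by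
    have hinf : (Set.Ico (0:ℝ) (0 + π)).Infinite :=
      Set.Ico_infinite (by simpa using Real.pi_pos)
    obtain ⟨θ₀, h⟩ := (hinf.diff (Pairs.image c₀).finite_toSet).nonempty
    exact ⟨θ₀, h.1, by simpa using h.2⟩
  have hθ₀ : ∀ p q : Fin n, p ≠ q → dirF θ₀ (P p - P q) ≠ 0 := by
    intro p q hpq h0
    have key : ∀ a b : Fin n, a < b → dirF θ₀ (P a - P b) = 0 → False := by
      intro a b hab h0
      have hu := existsUnique_crit (hd a b hab.ne) 0
      have h1 := hc₀ (a, b) hab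
      have he : θ₀ = c₀ (a, b) := hu.unique ⟨hθ₀Ico, h0⟩ ⟨h1.1, h1.2⟩
      exact hθ₀Z (he ▸ Finset.mem_image_of_mem _ (by simp [hPairs, hab]))
    rcases hpq.lt_or_gt with hlt | hlt
    · exact key p q hlt h0
    · exact key q p hlt
        (by rw [show P q - P p = -(P p - P q) by abel, dirF_neg, h0, neg_zero])
  -- critical angle per pair in [θ₀, θ₀+π)
  have hcc : ∀ x : Fin n × Fin n, ∃ θ : ℝ, x.1 ≠ x.2 →
      θ ∈ Set.Ico θ₀ (θ₀ + π) ∧ dirF θ (P x.1 - P x.2) = 0 ∧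
      ∀ θ' ∈ Set.Ico θ₀ (θ₀ + π), dirF θ' (P x.1 - P x.2) = 0 → θ' = θ := by
    intro x
    by_cases h : x.1 ≠ x.2
    · obtain ⟨θ, hθ, hθu⟩ := existsUnique_crit (hd _ _ h) θ₀
      exact ⟨θ, fun _ => ⟨hθ.1, hθ.2, fun θ' h1 h2 => hθu θ' ⟨h1, h2⟩⟩⟩
    · exact ⟨0, fun h' => absurd h' h⟩
  choose c hc using hcc
  have hcIoo : ∀ x : Fin n × Fin n, x.1 ≠ x.2 → c x ∈ Set.Ioo θ₀ (θ₀ + π) := by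
    intro x hx
    have h1 := (hc x hx).1
    have h2 := (hc x hx).2.1
    rcases eq_or_lt_of_le h1.1 with he | hlt
    · exact absurd h2 (he ▸ hθ₀ _ _ hx)
    · exact ⟨hlt, h1.2⟩
  have hcsymm : ∀ p q : Fin n, p ≠ q → c (p, q) = c (q, p) := by
    intro p q hpq
    refine ((hc (p, q) hpq).2.2 (c (q, p)) (hc (q, p) hpq.symm).1 ?_).symm
    rw [show P p - P q = -(P q - P p) by abel, dirF_neg,
      (hc (q, p) hpq.symm).2.1, neg_zero]
  have hcinj : ∀ p q p' q' : Fin n, p ≠ q → p' ≠ q' →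
      ({p, q} : Set (Fin n)) ≠ {p', q'} → c (p, q) ≠ c (p', q') := by
    intro p q p' q' h1 h2 h3 heq
    apply hpar p q p' q' h1 h2 h3
    apply det2_eq_zero_of_dirF (θ := c (p, q))
    · rw [show P q - P p = -(P p - P q) by abel, dirF_neg, (hc (p, q) h1).2.1, neg_zero]
    · rw [heq, show P q' - P p' = -(P p' - P q') by abel, dirF_neg,
        (hc (p', q') h2).2.1, neg_zero]
  set S : Finset ℝ := Pairs.image c with hS
  have hScard : S.card = N := by
    rw [hS, Finset.card_image_of_injOn, hPairsCard]
    intro x hx y hy hxy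
    simp only [hPairs, Finset.coe_filter, Set.mem_setOf_eq, Finset.mem_univ, true_and] at hx hy
    by_contra hne
    have hsets : ({x.1, x.2} : Set (Fin n)) ≠ {y.1, y.2} := by
      intro hset
      rcases Set.pair_eq_pair_iff.1 hset with ⟨ha, hb⟩ | ⟨ha, hb⟩
      · exact hne (Prod.ext ha hb)
      · exact absurd (ha ▸ hb ▸ hx) (asymm hy)
    exact hcinj x.1 x.2 y.1 y.2 hx.ne hy.ne hsets hxy
  have hcS : ∀ p q : Fin n, p ≠ q → c (p, q) ∈ S := by
    intro p q hpq
    rcases hpq.lt_or_gt with h | h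
    · exact Finset.mem_image_of_mem _ (by simp [hPairs, h])
    · rw [hcsymm p q hpq]
      exact Finset.mem_image_of_mem _ (by simp [hPairs, h])
  set eS := S.orderIsoOfFin hScard with heS
  set t : Fin N → ℝ := fun i => (eS i : ℝ) with htdef
  have htmono : StrictMono t := fun i j h => Subtype.coe_lt_coe.2 (eS.lt_iff_lt.2 h)
  have htS : ∀ i, t i ∈ S := fun i => (eS i).2
  have htsurj : ∀ s ∈ S, ∃ i, t i = s := fun s hs =>
    ⟨eS.symm ⟨s, hs⟩, by simp [htdef]⟩
  have hA : ∀ i : Fin N, ∃ x : Fin n × Fin n, x.1 < x.2 ∧ c x = t i := by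
    intro i
    obtain ⟨x, hx, hcx⟩ := Finset.mem_image.1 (htS i)
    exact ⟨x, (Finset.mem_filter.1 hx).2, hcx⟩
  choose A hA1 hA2 using hA
  have hAne : ∀ i, (A i).1 ≠ (A i).2 := fun i => (hA1 i).ne
  have htIoo : ∀ i, t i ∈ Set.Ioo θ₀ (θ₀ + π) := fun i => (hA2 i) ▸ hcIoo (A i) (hAne i)
  -- the ladder of separating values
  set w : ℕ → ℝ := fun k => if k = 0 then θ₀ else
    if hk : k - 1 < N then t ⟨k - 1, hk⟩ else θ₀ + π with hw
  have hw0 : w 0 = θ₀ := by simp [hw]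
  have hwt : ∀ i : Fin N, w ((i : ℕ) + 1) = t i := by
    intro i
    have h2 : (i : ℕ) + 1 - 1 < N := by have := i.isLt; omega
    have h3 : (⟨(i : ℕ) + 1 - 1, h2⟩ : Fin N) = i := Fin.ext (by simp)
    simp only [hw, if_neg (Nat.succ_ne_zero _), dif_pos h2, h3]
  have hwN1 : w (N + 1) = θ₀ + π := by
    simp only [hw]
    rw [if_neg (Nat.succ_ne_zero _), dif_neg (by omega)]
  have hstep : ∀ k, k ≤ N → w k < w (k + 1) := by
    intro k hk
    rcases Nat.eq_zero_or_pos k with rfl | hkpos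
    · rcases Nat.eq_zero_or_pos N with hN0 | hN0
      · rw [hw0, show (0:ℕ) + 1 = N + 1 by omega, hwN1]
        linarith [Real.pi_pos]
      · rw [hw0, show (0:ℕ) + 1 = ((⟨0, hN0⟩ : Fin N) : ℕ) + 1 by simp, hwt ⟨0, hN0⟩]
        exact (htIoo _).1
    · obtain ⟨j, rfl⟩ := Nat.exists_eq_succ_of_ne_zero hkpos.ne'
      simp only [Nat.succ_eq_add_one] at *
      have hj : j < N := by omega
      rw [show j + 1 = ((⟨j, hj⟩ : Fin N) : ℕ) + 1 by simp, hwt ⟨j, hj⟩]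
      rcases Nat.lt_or_ge (j + 1) N with h2 | h2
      · rw [show (((⟨j, hj⟩ : Fin N) : ℕ) + 1) + 1 = ((⟨j + 1, h2⟩ : Fin N) : ℕ) + 1 by simp,
          hwt ⟨j + 1, h2⟩]
        exact htmono (by simp [Fin.lt_def])
      · have hje : j + 1 = N := by omega
        rw [show (((⟨j, hj⟩ : Fin N) : ℕ) + 1) + 1 = N + 1 by simp [hje], hwN1]
        exact (htIoo _).2
  have hwlt : ∀ j k, j < k → k ≤ N + 1 → w j < w k := by
    intro j k
    induction k with
    | zero => omega
    | succ m ih =>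
      intro hjk hk
      rcases Nat.lt_succ_iff_lt_or_eq.1 hjk with h | h
      · exact (ih h (by omega)).trans (hstep m (by omega))
      · subst h; exact hstep j (by omega)
  have hwle : ∀ j k, j ≤ k → k ≤ N + 1 → w j ≤ w k := by
    intro j k hjk hk
    rcases eq_or_lt_of_le hjk with rfl | h
    · exact le_rfl
    · exact (hwlt j k h hk).le
  -- the sample angles
  set Θ : Fin (N + 1) → ℝ := fun m => (w m + w ((m : ℕ) + 1)) / 2 with hΘdef
  have hΘlo : ∀ m : Fin (N + 1), w m < Θ m := by
    intro m
    have := hstep m (by omega)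
    simp only [hΘdef]; linarith
  have hΘhi : ∀ m : Fin (N + 1), Θ m < w ((m : ℕ) + 1) := by
    intro m
    have := hstep m (by omega)
    simp only [hΘdef]; linarith
  have hΘmono : StrictMono Θ := by
    intro m m' h
    have h1 := hΘhi m
    have h2 := hΘlo m'
    have h3 : w ((m : ℕ) + 1) ≤ w (m' : ℕ) := hwle _ _ (by exact Fin.lt_def.1 h) (by omega)
    linarith
  have hΘIoo : ∀ m : Fin (N + 1), Θ m ∈ Set.Ioo θ₀ (θ₀ + π) := by
    intro m
    constructor
    · calc θ₀ = w 0 := hw0.symm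
        _ ≤ w m := hwle 0 m (Nat.zero_le _) (by omega)
        _ < Θ m := hΘlo m
    · calc Θ m < w ((m : ℕ) + 1) := hΘhi m
        _ ≤ w (N + 1) := hwle _ _ (by omega) le_rfl
        _ = θ₀ + π := hwN1
  -- window lemma: no zero of a non-active pair in [Θ i, Θ (i+1)]
  have hwin : ∀ (i : Fin N) (p q : Fin n), p ≠ q → c (p, q) ≠ t i →
      ∀ x ∈ Set.Icc (Θ i.castSucc) (Θ i.succ), dirF x (P p - P q) ≠ 0 := by
    intro i p q hpq hct x hx h0
    have hxIco : x ∈ Set.Ico θ₀ (θ₀ + π) := by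
      have l1 : θ₀ < Θ i.castSucc := (hΘIoo _).1
      have l2 : Θ i.succ < θ₀ + π := (hΘIoo _).2
      exact ⟨le_trans l1.le hx.1, lt_of_le_of_lt hx.2 l2⟩
    have hxeq : x = c (p, q) := (hc (p, q) hpq).2.2 x hxIco h0
    obtain ⟨j, hj⟩ := htsurj (c (p, q)) (hcS p q hpq)
    have hji : (j : ℕ) ≠ (i : ℕ) := fun he => hct (by rw [← hj, Fin.ext he])
    have hlo : w ((i : ℕ)) < x := by
      have := hΘlo i.castSucc
      simp only [Fin.coe_castSucc] at this
      exact lt_of_lt_of_le this hx.1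
    have hhi : x < w ((i : ℕ) + 1 + 1) := by
      have := hΘhi i.succ
      simp only [Fin.val_succ] at this
      exact lt_of_le_of_lt hx.2 this
    rw [hxeq, ← hj, ← hwt j] at hlo hhi
    rcases Nat.lt_or_ge (j : ℕ) (i : ℕ) with h2 | h2
    · exact absurd hlo (not_lt.2 (hwle ((j : ℕ) + 1) (i : ℕ) (by omega) (by omega)))
    · have h4 : (i : ℕ) + 1 + 1 ≤ (j : ℕ) + 1 := by omega
      exact absurd hhi (not_lt.2 (hwle _ _ h4 (by omega)))
  -- no zero at any sample angle
  have hnc : ∀ m : Fin (N + 1), ∀ p q : Fin n, p ≠ q → dirF (Θ m) (P p - P q) ≠ 0 := by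
    intro m p q hpq h0
    have hmem : Θ m ∈ Set.Ico θ₀ (θ₀ + π) := ⟨(hΘIoo m).1.le, (hΘIoo m).2⟩
    have hxeq := (hc (p, q) hpq).2.2 _ hmem h0
    obtain ⟨j, hj⟩ := htsurj _ (hcS p q hpq)
    have h1 := hΘlo m
    have h2 := hΘhi m
    rw [hxeq, ← hj, ← hwt j] at h1 h2
    rcases Nat.lt_or_ge ((j : ℕ) + 1) ((m : ℕ) + 1) with h3 | h3
    · exact absurd h1 (not_lt.2 (hwle ((j : ℕ) + 1) (m : ℕ) (by omega) (by omega)))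
    · exact absurd h2 (not_lt.2 (hwle ((m : ℕ) + 1) ((j : ℕ) + 1) (by omega) (by omega)))
  set u : Fin (N + 1) → Fin n → ℝ := fun m p => dirF (Θ m) (P p) with hu
  have husub : ∀ m (p q : Fin n), dirF (Θ m) (P p - P q) = u m p - u m q := by
    intro m p q; rw [dirF_sub]
  have huinj : ∀ m, Function.Injective (u m) := by
    intro m p q hpq
    by_contra hne
    exact hnc m p q hne (by rw [husub, hpq, sub_self])
  set σ : Fin (N + 1) → Equiv.Perm (Fin n) := fun m => Tuple.sort (u m) with hσdef
  have hσ : ∀ m, StrictMono (u m ∘ σ m) := fun m =>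
    (Tuple.monotone_sort (u m)).strictMono_of_injective
      ((huinj m).comp (Equiv.injective _))
  -- order preservation for non-active pairs
  have hpres : ∀ (i : Fin N) (p q : Fin n), p ≠ q →
      ({p, q} : Set (Fin n)) ≠ {(A i).1, (A i).2} →
      (u i.castSucc p < u i.castSucc q ↔ u i.succ p < u i.succ q) := by
    intro i p q hpq hset
    have hct : c (p, q) ≠ t i := by
      rw [← hA2 i]
      exact hcinj p q _ _ hpq (hAne i) hset
    have hle : Θ i.castSucc ≤ Θ i.succ := (hΘmono (show i.castSucc < i.succ from Fin.castSucc_lt_succ)).le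
    have hsc := sign_const (P p - P q) hle (fun x hx => hwin i p q hpq hct x hx)
    rw [husub, husub] at hsc
    constructor <;> intro h <;> nlinarith [hsc]
  -- the active pair flips
  have hflip : ∀ i : Fin N,
      dirF (Θ i.castSucc) (P (A i).1 - P (A i).2) *
        dirF (Θ i.succ) (P (A i).1 - P (A i).2) < 0 := by
    intro i
    have ht0 : dirF (t i) (P (A i).1 - P (A i).2) = 0 := by
      rw [← hA2 i]; exact (hc (A i) (hAne i)).2.1
    apply sign_flip (hd _ _ (hAne i)) ht0
    · constructor
      · have l1 := (htIoo i).2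
        have l2 := (hΘIoo i.castSucc).1
        linarith
      · have h := hΘhi i.castSucc
        rwa [Fin.coe_castSucc, hwt i] at h
    · constructor
      · have h := hΘlo i.succ
        rwa [Fin.val_succ, hwt i] at h
      · have l1 := (htIoo i).1
        have l2 := (hΘIoo i.succ).2
        linarith
  -- oriented active pairs
  have hAB : ∀ i : Fin N, ∃ ab : Fin n × Fin n, ab.1 ≠ ab.2 ∧
      ({ab.1, ab.2} : Set (Fin n)) = {(A i).1, (A i).2} ∧
      u i.castSucc ab.1 < u i.castSucc ab.2 ∧ u i.succ ab.2 < u i.succ ab.1 := by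
    intro i
    have hf := hflip i
    rw [husub, husub] at hf
    rcases lt_or_ge (u i.castSucc (A i).1) (u i.castSucc (A i).2) with h | h
    · exact ⟨A i, hAne i, rfl, h, by nlinarith⟩
    · have hne : u i.castSucc (A i).2 ≠ u i.castSucc (A i).1 :=
        fun he => (hAne i).symm (huinj _ he)
      have h' : u i.castSucc (A i).2 < u i.castSucc (A i).1 := lt_of_le_of_ne h hne
      exact ⟨((A i).2, (A i).1), (hAne i).symm, Set.pair_comm _ _, h', by nlinarith⟩
  choose B hBne hBset hBlt hBgt using hAB
  -- the tying pair is adjacent just before the flip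
  have hadj : ∀ i : Fin N,
      (((σ i.castSucc).symm (B i).2) : ℕ) = (((σ i.castSucc).symm (B i).1) : ℕ) + 1 := by
    intro i
    have hria : σ i.castSucc ((σ i.castSucc).symm (B i).1) = (B i).1 :=
      Equiv.apply_symm_apply _ _
    have hrib : σ i.castSucc ((σ i.castSucc).symm (B i).2) = (B i).2 :=
      Equiv.apply_symm_apply _ _
    set ia := (σ i.castSucc).symm (B i).1 with hiadef
    set ib := (σ i.castSucc).symm (B i).2 with hibdef
    have hlt : ia < ib := by
      have h1 := hBlt i
      rw [← hria, ← hrib] at h1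
      exact (hσ i.castSucc).lt_iff_lt.1 h1
    by_contra hne
    have hmidlt : (ia : ℕ) + 1 < (ib : ℕ) := by
      have := Fin.lt_def.1 hlt
      omega
    set pm : Fin n := ⟨(ia : ℕ) + 1, lt_trans hmidlt ib.isLt⟩ with hpm
    set cm := σ i.castSucc pm with hcmdef
    have hcm1 : cm ≠ (B i).1 := by
      rw [← hria]
      intro h
      have := (σ i.castSucc).injective h
      have := congrArg Fin.val this
      simp [hpm] at this
    have hcm2 : cm ≠ (B i).2 := by
      rw [← hrib]
      intro h
      have := (σ i.castSucc).injective h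
      have := congrArg Fin.val this
      simp [hpm] at this
      omega
    have h1 : u i.castSucc (B i).1 < u i.castSucc cm := by
      have hplt : ia < pm := by simp [Fin.lt_def, hpm]
      have := hσ i.castSucc hplt
      rwa [Function.comp_apply, Function.comp_apply, hria] at this
    have h2 : u i.castSucc cm < u i.castSucc (B i).2 := by
      have hplt : pm < ib := by simp [Fin.lt_def, hpm]; omega
      have := hσ i.castSucc hplt
      rwa [Function.comp_apply, Function.comp_apply, hrib] at this
    have hΘt1 : Θ i.castSucc ≤ t i := by
      have h := hΘhi i.castSucc
      rw [Fin.coe_castSucc, hwt i] at h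
      exact h.le
    have hΘt2 : t i ≤ Θ i.succ := by
      have h := hΘlo i.succ
      rw [Fin.val_succ, hwt i] at h
      exact h.le
    have key : ∀ x y : Fin n, x ≠ y → ({x, y} : Set (Fin n)) ≠ {(A i).1, (A i).2} →
        u i.castSucc x < u i.castSucc y → dirF (t i) (P x - P y) < 0 := by
      intro x y hxy hset hult
      have hct : c (x, y) ≠ t i := by
        rw [← hA2 i]
        exact hcinj _ _ _ _ hxy (hAne i) hset
      have hsc := sign_const (P x - P y) hΘt1
        (fun z hz => hwin i x y hxy hct z ⟨hz.1, le_trans hz.2 hΘt2⟩)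
      rw [husub] at hsc
      nlinarith
    have hBsub : ∀ z : Fin n, z ∈ ({(B i).1, (B i).2} : Set (Fin n)) ↔
        z ∈ ({(A i).1, (A i).2} : Set (Fin n)) := fun z => by rw [hBset i]
    have hsA : ({(B i).1, cm} : Set (Fin n)) ≠ {(A i).1, (A i).2} := by
      intro h
      have hcmmem : cm ∈ ({(A i).1, (A i).2} : Set (Fin n)) := h ▸ (by simp)
      rcases (hBsub cm).2 hcmmem with h' | h'
      · exact hcm1 h'
      · exact hcm2 h'
    have hsB : ({cm, (B i).2} : Set (Fin n)) ≠ {(A i).1, (A i).2} := by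
      intro h
      have hcmmem : cm ∈ ({(A i).1, (A i).2} : Set (Fin n)) := h ▸ (by simp)
      rcases (hBsub cm).2 hcmmem with h' | h'
      · exact hcm1 h'
      · exact hcm2 h'
    have k1 := key (B i).1 cm (Ne.symm hcm1) hsA h1
    have k2 := key cm (B i).2 hcm2 hsB h2
    have k0 : dirF (t i) (P (B i).1 - P (B i).2) = 0 := by
      rcases Set.pair_eq_pair_iff.1 (hBset i) with ⟨e1, e2⟩ | ⟨e1, e2⟩
      · rw [e1, e2, ← hA2 i]
        exact (hc (A i) (hAne i)).2.1
      · rw [e1, e2, show P (A i).2 - P (A i).1 = -(P (A i).1 - P (A i).2) by abel, dirF_neg,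
          ← hA2 i, (hc (A i) (hAne i)).2.1, neg_zero]
    have ksum : dirF (t i) (P (B i).1 - P cm) + dirF (t i) (P cm - P (B i).2) =
        dirF (t i) (P (B i).1 - P (B i).2) := by
      rw [dirF_sub, dirF_sub, dirF_sub]; ring
    linarith
  set pos : Fin N → Fin n := fun i => (σ i.castSucc).symm (B i).1 with hposdef
  have hposlt : ∀ i, (pos i).val + 1 < n := by
    intro i
    rw [hposdef]
    simp only
    rw [← hadj i]
    exact ((σ i.castSucc).symm (B i).2).isLt
  have hpos2 : ∀ i : Fin N, (⟨(pos i).val + 1, hposlt i⟩ : Fin n) =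
      (σ i.castSucc).symm (B i).2 := by
    intro i
    exact Fin.ext (by rw [hadj i])
  -- the swap relation
  have hswap : ∀ i : Fin N, σ i.succ =
      (Equiv.swap (pos i) ⟨(pos i).val + 1, hposlt i⟩).trans (σ i.castSucc) := by
    intro i
    set ia : Fin n := pos i with hiadef
    set ib : Fin n := ⟨(pos i).val + 1, hposlt i⟩ with hibdef
    have hibeq : ib = (σ i.castSucc).symm (B i).2 := hpos2 i
    have hria : σ i.castSucc ia = (B i).1 := Equiv.apply_symm_apply _ _
    have hrib : σ i.castSucc ib = (B i).2 := by
      rw [hibeq]; exact Equiv.apply_symm_apply _ _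
    have hiab : ia < ib := by
      rw [Fin.lt_def, hibdef]
      simp [hiadef]
    refine perm_eq_of_strictMono (hσ i.succ) ?_
    intro p q hpq
    simp only [Function.comp_apply, Equiv.trans_apply]
    by_cases hcase : p = ia ∧ q = ib
    · rw [hcase.1, hcase.2, Equiv.swap_apply_left, Equiv.swap_apply_right, hria, hrib]
      exact hBgt i
    · have hslt : Equiv.swap ia ib p < Equiv.swap ia ib q := by
        have hv : (ib : ℕ) = (ia : ℕ) + 1 := by rw [hibdef]
        by_cases hpa : p = ia
        · subst hpa
          have hqb : q ≠ ib := fun h => hcase ⟨rfl, h⟩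
          have hqa : q ≠ ia := (ne_of_lt hpq).symm
          rw [Equiv.swap_apply_left, Equiv.swap_apply_of_ne_of_ne hqa hqb]
          rw [Fin.lt_def] at hpq ⊢
          have : (q : ℕ) ≠ (ib : ℕ) := fun h => hqb (Fin.ext h)
          omega
        · by_cases hpb : p = ib
          · subst hpb
            have hqa : q ≠ ia := fun h => absurd (h ▸ hpq) (asymm hiab)
            have hqb : q ≠ ib := (ne_of_lt hpq).symm
            rw [Equiv.swap_apply_right, Equiv.swap_apply_of_ne_of_ne hqa hqb]
            exact lt_trans hiab hpq
          · by_cases hqa : q = ia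
            · subst hqa
              rw [Equiv.swap_apply_of_ne_of_ne hpa hpb, Equiv.swap_apply_left]
              exact lt_trans hpq hiab
            · by_cases hqb : q = ib
              · subst hqb
                rw [Equiv.swap_apply_of_ne_of_ne hpa hpb, Equiv.swap_apply_right]
                rw [Fin.lt_def] at hpq ⊢
                have h5 : (p : ℕ) ≠ (ia : ℕ) := fun h => hpa (Fin.ext h)
                omega
              · rw [Equiv.swap_apply_of_ne_of_ne hpa hpb,
                  Equiv.swap_apply_of_ne_of_ne hqa hqb]
                exact hpq
      have hptne : σ i.castSucc (Equiv.swap ia ib p) ≠ σ i.castSucc (Equiv.swap ia ib q) :=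
        fun h => (ne_of_lt hslt) ((σ i.castSucc).injective h)
      have hset : ({σ i.castSucc (Equiv.swap ia ib p), σ i.castSucc (Equiv.swap ia ib q)} :
          Set (Fin n)) ≠ {(A i).1, (A i).2} := by
        rw [← hBset i]
        intro h
        rcases Set.pair_eq_pair_iff.1 h with ⟨e1, e2⟩ | ⟨e1, e2⟩
        · have hp : Equiv.swap ia ib p = ia := (σ i.castSucc).injective (by rw [e1, ← hria])
          have hq : Equiv.swap ia ib q = ib := (σ i.castSucc).injective (by rw [e2, ← hrib])
          have hp' : p = ib := by
            have := congrArg (Equiv.swap ia ib) hp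
            rwa [Equiv.swap_apply_self, Equiv.swap_apply_left] at this
          have hq' : q = ia := by
            have := congrArg (Equiv.swap ia ib) hq
            rwa [Equiv.swap_apply_self, Equiv.swap_apply_right] at this
          rw [hp', hq'] at hpq
          exact absurd hpq (asymm hiab)
        · have hp : Equiv.swap ia ib p = ib := (σ i.castSucc).injective (by rw [e1, ← hrib])
          have hq : Equiv.swap ia ib q = ia := (σ i.castSucc).injective (by rw [e2, ← hria])
          have hp' : p = ia := by
            have := congrArg (Equiv.swap ia ib) hp
            rwa [Equiv.swap_apply_self, Equiv.swap_apply_right] at this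
          have hq' : q = ib := by
            have := congrArg (Equiv.swap ia ib) hq
            rwa [Equiv.swap_apply_self, Equiv.swap_apply_left] at this
          exact hcase ⟨hp', hq'⟩
      have hu1 : u i.castSucc (σ i.castSucc (Equiv.swap ia ib p)) <
          u i.castSucc (σ i.castSucc (Equiv.swap ia ib q)) := hσ i.castSucc hslt
      exact (hpres i _ _ hptne hset).1 hu1
  -- the swap set at step i
  have hswapset : ∀ j : Fin N,
      ({σ j.castSucc (pos j), σ j.castSucc ⟨(pos j).val + 1, hposlt j⟩} : Set (Fin n)) =
        {(A j).1, (A j).2} := by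
    intro j
    rw [hpos2 j, ← hBset j]
    rw [show pos j = (σ j.castSucc).symm (B j).1 from rfl]
    rw [Equiv.apply_symm_apply, Equiv.apply_symm_apply]
  refine ⟨σ, pos, hposlt, Θ, hΘmono, ?_, ?_, hswap, ?_⟩
  · -- Θ last < Θ 0 + π
    have h1 : Θ (Fin.last N) < w (N + 1) := by
      have := hΘhi (Fin.last N)
      simpa using this
    have h2 : θ₀ < Θ 0 := by
      have := hΘlo 0
      rwa [show ((0 : Fin (N + 1)) : ℕ) = 0 from rfl, hw0] at this
    rw [hwN1] at h1
    linarith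
  · intro m p q hpq
    exact hσ m hpq
  · intro a b hab
    obtain ⟨i, hi⟩ := htsurj (c (a, b)) (hcS a b hab)
    refine ⟨i, ?_, ?_⟩
    · show ({σ i.castSucc (pos i), σ i.castSucc ⟨(pos i).val + 1, hposlt i⟩} :
          Set (Fin n)) = {a, b}
      rw [hswapset i]
      by_contra hne
      exact hcinj _ _ a b (hAne i) hab hne (by show c (A i) = c (a, b); rw [hA2 i, hi])
    · intro j hj
      rw [hswapset j] at hj
      have hcj' : c ((A j).1, (A j).2) = c (a, b) := by
        rcases Set.pair_eq_pair_iff.1 hj with ⟨e1, e2⟩ | ⟨e1, e2⟩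
        · rw [e1, e2]
        · rw [e1, e2, hcsymm b a hab.symm]
      have hcj : c (A j) = c (a, b) := hcj'
      have htj : t j = t i := by
        rw [← hA2 j, hcj, hi]
      exact htmono.injective htj
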